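/- Degree structure of the new vertices (Section 4, first structural claim): Let m ≥ 1. Every vertex x ∈ V_m \ V_{m−1} has exactly 2(n−1) neighbors in the graph Γ_m; exactly 2 of these neighbors lie in V_{m−1}, and hence exactly 2(n−2) of them lie in V_m \ V_{m−1}. -/

import Mathlib

open Finset

noncomputable section

/-- Ambient Euclidean space `ℝ^{n-1}`. -/
abbrev Amb (n : ℕ) := EuclideanSpace ℝ (Fin (n - 1))

/-- The contraction `f_i(x) = (x + x_i)/2`. -/
def fmap {n : ℕ} (pts : Fin n → Amb n) (i : Fin n) (x : Amb n) : Amb n :=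
  (2 : ℝ)⁻¹ • (x + pts i)

/-- Composition of contractions along a list (first entry applied last... actually first). -/
def fList {n : ℕ} (pts : Fin n → Amb n) : List (Fin n) → Amb n → Amb n
  | [] => id
  | i :: t => fmap pts i ∘ fList pts t

/-- The `m`-contraction `f_w = f_{w_0} ∘ ⋯ ∘ f_{w_{m-1}}`. -/
def fWord {n m : ℕ} (pts : Fin n → Amb n) (w : Fin m → Fin n) : Amb n → Amb n :=
  fList pts (List.ofFn w)

/-- The vertex set `V_m = ⋃_w f_w(V_0)`, where `V_0 = {x_0, …, x_{n-1}}`. -/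
def V {n : ℕ} (pts : Fin n → Amb n) (m : ℕ) : Set (Amb n) :=
  ⋃ w : Fin m → Fin n, fWord pts w '' Set.range pts

/-- Adjacency in the graph `Γ_m`. -/
def Adj {n : ℕ} (pts : Fin n → Amb n) (m : ℕ) (x y : Amb n) : Prop :=
  x ≠ y ∧ ∃ w : Fin m → Fin n,
    x ∈ fWord pts w '' Set.range pts ∧ y ∈ fWord pts w '' Set.range pts

/-- The graph Laplacian `Δ_m u (x) = ∑_{y ~ x} (u(x) - u(y))`. -/
def lap {n : ℕ} (pts : Fin n → Amb n) (m : ℕ) (u : Amb n → ℝ) (x : Amb n) : ℝ :=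
  ∑ᶠ y ∈ {y | Adj pts m x y}, (u x - u y)

/-- `u` is an eigenfunction of `Δ_m` with eigenvalue `lam`:
`Δ_m u (x) = lam * u x` for all `x ∈ V_m \ V_0`. -/
def IsEigen {n : ℕ} (pts : Fin n → Amb n) (m : ℕ) (u : Amb n → ℝ) (lam : ℝ) : Prop :=
  ∀ x ∈ V pts m \ V pts 0, lap pts m u x = lam * u x

/-- The point `x_{r,s} = f_a((x_r + x_s)/2)` for a word `a` of length `m-1`. -/
def xpt {n m : ℕ} (pts : Fin n → Amb n) (a : Fin m → Fin n) (r s : Fin n) : Amb n :=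
  fWord pts a ((2 : ℝ)⁻¹ • (pts r + pts s))

/-- The graph energy `E_m(u) = ∑_{x ~ y} (u(x) - u(y))²`, summed over unordered
adjacent pairs (each ordered pair counted once, then halved). -/
def energy {n : ℕ} (pts : Fin n → Amb n) (m : ℕ) (u : Amb n → ℝ) : ℝ :=
  (2 : ℝ)⁻¹ * ∑ᶠ p ∈ {p : Amb n × Amb n | Adj pts m p.1 p.2}, (u p.1 - u p.2) ^ 2

namespace DSNV

variable {n : ℕ}

def evec (j : Fin n) : Fin n → ℕ := fun i => if i = j then 1 else 0

def hvec : List (Fin n) → Fin n → ℕ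
  | [] => fun _ => 0
  | a :: t => fun i => hvec t i + (if i = a then 2 ^ t.length else 0)

lemma sum_evec (j : Fin n) : ∑ i, evec j i = 1 := by simp [evec]

lemma sum_hvec (l : List (Fin n)) : ∑ i, hvec l i = 2 ^ l.length - 1 := by
  induction l with
  | nil =>
    simp [hvec]
  | cons a t ih =>
    have h1 : (1:ℕ) ≤ 2 ^ t.length := Nat.one_le_two_pow
    simp only [hvec, List.length_cons, Finset.sum_add_distrib, ih,
      Finset.sum_ite_eq' Finset.univ a fun _ => 2 ^ t.length, Finset.mem_univ, if_true,
      pow_succ]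
    omega

lemma hvec_le (l : List (Fin n)) (i : Fin n) : hvec l i ≤ 2 ^ l.length - 1 := by
  have := Finset.single_le_sum (f := hvec l) (fun i _ => Nat.zero_le _) (Finset.mem_univ i)
  rw [sum_hvec] at this; exact this

lemma hvec_inj : ∀ (l l' : List (Fin n)), l.length = l'.length →
    (∀ i, hvec l i = hvec l' i) → l = l' := by
  intro l
  induction l with
  | nil => intro l' h _; cases l' <;> simp_all
  | cons a t ih =>
    intro l' hlen heq
    cases l' with
    | nil => simp at hlen
    | cons a' t' =>
      have hlen' : t.length = t'.length := by simpa using hlen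
      have haa : a = a' := by
        by_contra hne
        have h1 := heq a
        have h2 := heq a'
        rw [show (hvec (a :: t) : Fin n → ℕ) = fun i => hvec t i + (if i = a then 2 ^ t.length else 0) from rfl] at h1 h2
        rw [show (hvec (a' :: t') : Fin n → ℕ) = fun i => hvec t' i + (if i = a' then 2 ^ t'.length else 0) from rfl] at h1 h2
        simp only [eq_self_iff_true, if_true, if_neg hne, if_neg (Ne.symm hne), add_zero, hlen'] at h1 h2
        have b1 := hvec_le t' a
        have b2 := hvec_le t a'
        rw [hlen'] at b2
        have h1' : (1:ℕ) ≤ 2 ^ t'.length := Nat.one_le_two_pow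
        omega
      subst haa
      have : t = t' := by
        refine ih t' hlen' fun i => ?_
        have := heq i
        simp only [hvec, hlen'] at this ⊢
        omega
      rw [this]

lemma hvec_append (t : List (Fin n)) (b : Fin n) (i : Fin n) :
    hvec (t ++ [b]) i = 2 * hvec t i + evec b i := by
  induction t with
  | nil => simp [hvec, evec]
  | cons a s ih =>
    show hvec (a :: (s ++ [b])) i = _
    simp only [hvec, ih, List.length_append, List.length_cons, List.length_nil, evec]
    rcases eq_or_ne i a with h | h <;> simp [h, pow_succ] <;> omega

lemma fList_eq (pts : Fin n → Amb n) (l : List (Fin n)) (x : Amb n) :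
    fList pts l x = ((2 : ℝ) ^ l.length)⁻¹ • (x + ∑ i, (hvec l i : ℝ) • pts i) := by
  induction l with
  | nil => simp [fList, hvec]
  | cons a t ih =>
    show fmap pts a (fList pts t x) = _
    rw [fmap, ih]
    have hs : ∑ i, (hvec (a :: t) i : ℝ) • pts i
        = (∑ i, (hvec t i : ℝ) • pts i) + (2 : ℝ) ^ t.length • pts a := by
      rw [show (hvec (a :: t) : Fin n → ℕ) = fun i => hvec t i + (if i = a then 2 ^ t.length else 0) from rfl]
      push_cast
      simp only [add_smul, Finset.sum_add_distrib, ite_smul, zero_smul]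
      rw [Finset.sum_ite_eq' Finset.univ a fun i => ((2:ℝ) ^ t.length) • pts i]
      simp
    rw [hs, List.length_cons, pow_succ]
    have h2 : ((2:ℝ) ^ t.length) ≠ 0 := by positivity
    match_scalars <;> (field_simp; try ring)

lemma fList_pts (pts : Fin n → Amb n) (l : List (Fin n)) (j : Fin n) :
    fList pts l (pts j)
      = ((2 : ℝ) ^ l.length)⁻¹ • ∑ i, ((hvec l i + evec j i : ℕ) : ℝ) • pts i := by
  rw [fList_eq]
  congr 1
  have : pts j = ∑ i, (evec j i : ℝ) • pts i := by
    simp [evec, apply_ite (Nat.cast : ℕ → ℝ), ite_smul]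
  rw [this, ← Finset.sum_add_distrib]
  push_cast
  simp [add_smul, add_comm]

lemma rep_eq {pts : Fin n → Amb n} (hpts : AffineIndependent ℝ pts)
    {l l' : List (Fin n)} {j j' : Fin n} (hlen : l.length = l'.length)
    (h : fList pts l (pts j) = fList pts l' (pts j')) :
    ∀ i, hvec l i + evec j i = hvec l' i + evec j' i := by
  set m := l.length with hm
  set w1 : Fin n → ℝ := fun i => ((hvec l i + evec j i : ℕ) : ℝ) / 2 ^ m with hw1
  set w2 : Fin n → ℝ := fun i => ((hvec l' i + evec j' i : ℕ) : ℝ) / 2 ^ m with hw2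
  have hpow : ((2:ℝ) ^ m) ≠ 0 := by positivity
  have hsum : ∀ (c : List (Fin n)) (u : Fin n), c.length = m →
      ∑ i, (((hvec c i + evec u i : ℕ) : ℝ) / 2 ^ m) = 1 := by
    intro c u hc
    rw [← Finset.sum_div, div_eq_one_iff_eq hpow, ← Nat.cast_sum]
    norm_cast
    rw [Finset.sum_add_distrib, sum_hvec, sum_evec, hc]
    have : (1:ℕ) ≤ 2 ^ m := Nat.one_le_two_pow
    omega
  have hs1 : ∑ i, w1 i = 1 := hsum l j rfl
  have hs2 : ∑ i, w2 i = 1 := hsum l' j' hlen.symm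
  have hcomb : ∀ (c : List (Fin n)) (u : Fin n), c.length = m →
      Finset.univ.affineCombination ℝ pts (fun i => ((hvec c i + evec u i : ℕ) : ℝ) / 2 ^ m)
        = fList pts c (pts u) := by
    intro c u hc
    rw [Finset.affineCombination_eq_linear_combination _ _ _ (hsum c u hc), fList_pts, hc,
      Finset.smul_sum]
    refine Finset.sum_congr rfl fun i _ => ?_
    rw [smul_smul, div_eq_inv_mul]
  have heq : w1 = w2 := by
    refine (affineIndependent_iff_eq_of_fintype_affineCombination_eq ℝ pts).mp hpts w1 w2 hs1 hs2 ?_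
    rw [hw1, hw2, hcomb l j rfl, hcomb l' j' hlen.symm, h]
  intro i
  have := congrFun heq i
  rw [hw1, hw2] at this
  simp only [div_eq_div_iff hpow hpow] at this
  exact_mod_cast mul_right_cancel₀ hpow this

lemma rep_eq' {pts : Fin n → Amb n} (hpts : AffineIndependent ℝ pts)
    {t t' : List (Fin n)} {b b' j j' : Fin n} (hlen : t.length = t'.length)
    (h : fList pts (t ++ [b]) (pts j) = fList pts (t' ++ [b']) (pts j')) :
    ∀ i, 2 * hvec t i + evec b i + evec j i = 2 * hvec t' i + evec b' i + evec j' i := by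
  intro i
  have := rep_eq hpts (by simp [hlen]) h i
  rw [hvec_append, hvec_append] at this
  omega

lemma evec_le_one {b j : Fin n} (h : b ≠ j) (i : Fin n) : evec b i + evec j i ≤ 1 := by
  simp only [evec]
  rcases eq_or_ne i b with h1 | h1
  · have h2 : ¬ i = j := fun e => h (h1.symm.trans e)
    rw [if_pos h1, if_neg h2]
  · rw [if_neg h1]
    split_ifs <;> omega

lemma pair_eq {b j r s : Fin n} (hrs : r ≠ s)
    (h : ∀ i, evec b i + evec j i = evec r i + evec s i) :
    (b = r ∧ j = s) ∨ (b = s ∧ j = r) := by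
  have h1 := h r
  have h2 := h s
  have h3 := h b
  have h4 := h j
  simp only [evec] at h1 h2 h3 h4
  by_cases hbr : b = r <;> by_cases hbs : b = s <;> by_cases hjr : j = r <;> by_cases hjs : j = s <;>
    simp_all

lemma fList_append (pts : Fin n → Amb n) (l₁ l₂ : List (Fin n)) (x : Amb n) :
    fList pts (l₁ ++ l₂) x = fList pts l₁ (fList pts l₂ x) := by
  induction l₁ with
  | nil => rfl
  | cons a t ih =>
    rw [List.cons_append]
    show fmap pts a (fList pts (t ++ l₂) x) = fmap pts a (fList pts t (fList pts l₂ x))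
    rw [ih]

lemma fmap_self (pts : Fin n → Amb n) (b : Fin n) : fmap pts b (pts b) = pts b := by
  rw [fmap]; module

lemma fList_concat (pts : Fin n → Amb n) (t : List (Fin n)) (b : Fin n) (x : Amb n) :
    fList pts (t ++ [b]) x = fList pts t (fmap pts b x) := by
  rw [fList_append]; rfl

lemma fList_concat_self (pts : Fin n → Amb n) (t : List (Fin n)) (b : Fin n) :
    fList pts (t ++ [b]) (pts b) = fList pts t (pts b) := by
  rw [fList_concat, fmap_self]

lemma mem_V_iff {pts : Fin n → Amb n} {m : ℕ} {x : Amb n} :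
    x ∈ V pts m ↔ ∃ l : List (Fin n), l.length = m ∧ ∃ j, fList pts l (pts j) = x := by
  constructor
  · rintro hx
    obtain ⟨w, hw⟩ := Set.mem_iUnion.mp hx
    obtain ⟨p, ⟨j, rfl⟩, hp⟩ := hw
    exact ⟨List.ofFn w, by simp, j, hp⟩
  · rintro ⟨l, hlen, j, hj⟩
    subst hlen
    refine Set.mem_iUnion.mpr ⟨l.get, ⟨pts j, ⟨j, rfl⟩, ?_⟩⟩
    rw [fWord, List.ofFn_get]
    exact hj

lemma mem_V_of_list {pts : Fin n → Amb n} {l : List (Fin n)} (j : Fin n) :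
    fList pts l (pts j) ∈ V pts l.length :=
  mem_V_iff.mpr ⟨l, rfl, j, rfl⟩

lemma exists_word {m : ℕ} {l : List (Fin n)} (hlen : l.length = m) :
    ∃ w : Fin m → Fin n, List.ofFn w = l := by
  subst hlen
  exact ⟨l.get, List.ofFn_get l⟩

/-- A vertex with a representation whose last letter differs from the endpoint index
is not in the previous level. -/
lemma not_mem_prev {pts : Fin n → Amb n} (hpts : AffineIndependent ℝ pts)
    {t : List (Fin n)} {b u : Fin n} (hbu : b ≠ u)
    (hmem : fList pts (t ++ [b]) (pts u) ∈ V pts t.length) : False := by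
  obtain ⟨c, hc, v, hv⟩ := mem_V_iff.mp hmem
  rw [← fList_concat_self pts c v] at hv
  have h := rep_eq' hpts (t := t) (t' := c) (by omega) hv.symm u
  rcases eq_or_ne u v with rfl | huv
  · simp only [evec, if_neg (Ne.symm hbu), eq_self_iff_true, if_true, if_neg] at h
    omega
  · simp only [evec, if_neg (Ne.symm hbu), eq_self_iff_true, if_true, if_neg huv] at h
    omega

lemma evec_apply_self (j : Fin n) : evec j j = 1 := if_pos rfl

lemma evec_apply_ne {j i : Fin n} (h : ¬ i = j) : evec j i = 0 := if_neg h

lemma pair_eq' {r t1 s t2 : Fin n} (hrs : r ≠ s)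
    (h : ∀ i, evec r i + evec t1 i = evec s i + evec t2 i) : t1 = s ∧ t2 = r := by
  have hs1 : t1 = s := by
    by_contra hts
    have h2 := h s
    rw [evec_apply_ne (fun e : s = r => hrs e.symm), evec_apply_ne (fun e : s = t1 => hts e.symm),
      evec_apply_self] at h2
    omega
  refine ⟨hs1, ?_⟩
  by_contra htr
  have h1 := h r
  rw [hs1, evec_apply_self, evec_apply_ne (fun e : r = s => hrs e),
    evec_apply_ne (fun e : r = t2 => htr e.symm)] at h1
  omega

lemma fmap_inj (pts : Fin n → Amb n) (i : Fin n) : Function.Injective (fmap pts i) := by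
  intro x y h
  rw [fmap, fmap] at h
  have h2 : ((2:ℝ)⁻¹) ≠ 0 := by norm_num
  have := smul_right_injective (Amb n) h2 h
  exact add_right_cancel this

lemma fList_inj (pts : Fin n → Amb n) (l : List (Fin n)) :
    Function.Injective (fList pts l) := by
  induction l with
  | nil => exact fun a b h => h
  | cons a t ih =>
    intro x y h
    exact ih (fmap_inj pts a h)

lemma fmap_comm (pts : Fin n → Amb n) (i j : Fin n) :
    fmap pts i (pts j) = fmap pts j (pts i) := by
  rw [fmap, fmap, add_comm]

end DSNV
/-- Degree structure of the new vertices at level m. -/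
theorem degree_structure_new_vertices
    (n : ℕ) (hn : 2 ≤ n) (pts : Fin n → Amb n) (hpts : AffineIndependent ℝ pts)
    (m : ℕ) (hm : 1 ≤ m) (x : Amb n) (hx : x ∈ V pts m \ V pts (m - 1)) :
    {y | Adj pts m x y}.ncard = 2 * (n - 1) ∧
    {y | Adj pts m x y ∧ y ∈ V pts (m - 1)}.ncard = 2 ∧
    {y | Adj pts m x y ∧ y ∈ V pts m \ V pts (m - 1)}.ncard = 2 * (n - 2) := by
  classical
  obtain ⟨k, rfl⟩ : ∃ k, m = k + 1 := ⟨m - 1, (Nat.succ_pred_eq_of_pos hm).symm⟩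
  simp only [Nat.add_sub_cancel] at hx ⊢
  obtain ⟨hxV, hxnot⟩ := hx
  obtain ⟨l, hlen, s, hrep⟩ := DSNV.mem_V_iff.mp hxV
  obtain ⟨a, r, rfl⟩ : ∃ a b, l = a ++ [b] := by
    rcases List.eq_nil_or_concat l with rfl | ⟨a, b, h⟩
    · simp at hlen
    · exact ⟨a, b, by rw [h, List.concat_eq_append]⟩
  have hak : a.length = k := by simpa using hlen
  have hrs : r ≠ s := by
    rintro rfl
    rw [DSNV.fList_concat_self] at hrep
    exact hxnot (hrep ▸ (hak ▸ DSNV.mem_V_of_list r))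
  have hrep2 : fList pts (a ++ [s]) (pts r) = x := by
    rw [DSNV.fList_concat, DSNV.fmap_comm, ← DSNV.fList_concat]
    exact hrep
  -- uniqueness of representations
  have huniq : ∀ (l' : List (Fin n)) (j : Fin n), l'.length = k + 1 →
      fList pts l' (pts j) = x → (l' = a ++ [r] ∧ j = s) ∨ (l' = a ++ [s] ∧ j = r) := by
    intro l' j hl' hre
    obtain ⟨t, b, rfl⟩ : ∃ t b, l' = t ++ [b] := by
      rcases List.eq_nil_or_concat l' with rfl | ⟨t, b, h⟩
      · simp at hl'
      · exact ⟨t, b, by rw [h, List.concat_eq_append]⟩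
    have htk : t.length = k := by simpa using hl'
    have hbj : b ≠ j := by
      rintro rfl
      rw [DSNV.fList_concat_self] at hre
      exact hxnot (hre ▸ (htk ▸ DSNV.mem_V_of_list b))
    have key := DSNV.rep_eq' hpts (htk.trans hak.symm) (hre.trans hrep.symm)
    have hev : ∀ i, DSNV.evec b i + DSNV.evec j i = DSNV.evec r i + DSNV.evec s i := by
      intro i
      have h1 := DSNV.evec_le_one hbj i
      have h2 := DSNV.evec_le_one hrs i
      have h3 := key i
      omega
    have hhv : ∀ i, DSNV.hvec t i = DSNV.hvec a i := by
      intro i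
      have h1 := DSNV.evec_le_one hbj i
      have h2 := DSNV.evec_le_one hrs i
      have h3 := key i
      omega
    have hta : t = a := DSNV.hvec_inj t a (htk.trans hak.symm) hhv
    subst hta
    rcases DSNV.pair_eq hrs hev with ⟨hb, hj⟩ | ⟨hb, hj⟩
    · exact Or.inl ⟨by rw [hb], hj⟩
    · exact Or.inr ⟨by rw [hb], hj⟩
  set C1 := fList pts (a ++ [r]) '' Set.range pts with hC1
  set C2 := fList pts (a ++ [s]) '' Set.range pts with hC2
  have hfin1 : C1.Finite := (Set.finite_range pts).image _
  have hfin2 : C2.Finite := (Set.finite_range pts).image _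
  have hxC1 : x ∈ C1 := ⟨pts s, ⟨s, rfl⟩, hrep⟩
  have hxC2 : x ∈ C2 := ⟨pts r, ⟨r, rfl⟩, hrep2⟩
  obtain ⟨w1, hw1⟩ := DSNV.exists_word (show (a ++ [r]).length = k + 1 by simp [hak])
  obtain ⟨w2, hw2⟩ := DSNV.exists_word (show (a ++ [s]).length = k + 1 by simp [hak])
  -- the neighbour set
  have hN : {y | Adj pts (k+1) x y} = (C1 ∪ C2) \ {x} := by
    ext y
    simp only [Set.mem_setOf_eq, Set.mem_diff, Set.mem_union, Set.mem_singleton_iff]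
    constructor
    · rintro ⟨hne, w, ⟨p, ⟨j0, rfl⟩, hpx⟩, hy⟩
      have hlw : (List.ofFn w).length = k + 1 := by simp
      rw [fWord] at hy
      rcases huniq (List.ofFn w) j0 hlw hpx with ⟨hw, _⟩ | ⟨hw, _⟩
      · exact ⟨Or.inl (by rw [hC1, ← hw]; exact hy), fun hyx => hne (hyx ▸ rfl)⟩
      · exact ⟨Or.inr (by rw [hC2, ← hw]; exact hy), fun hyx => hne (hyx ▸ rfl)⟩
    · rintro ⟨hyC, hyx⟩
      refine ⟨fun e => hyx e.symm, ?_⟩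
      rcases hyC with hy1 | hy2
      · exact ⟨w1, by rw [fWord, hw1]; exact hxC1, by rw [fWord, hw1]; exact hy1⟩
      · exact ⟨w2, by rw [fWord, hw2]; exact hxC2, by rw [fWord, hw2]; exact hy2⟩
  have hC12 : C1 ∩ C2 = {x} := by
    ext z
    simp only [Set.mem_inter_iff, Set.mem_singleton_iff]
    constructor
    · rintro ⟨⟨p, ⟨t1, rfl⟩, h1⟩, ⟨q, ⟨t2, rfl⟩, h2⟩⟩
      have key := DSNV.rep_eq' hpts (rfl : a.length = a.length) (h1.trans h2.symm)
      have hev : ∀ i, DSNV.evec r i + DSNV.evec t1 i = DSNV.evec s i + DSNV.evec t2 i := by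
        intro i; have := key i; omega
      obtain ⟨ht1, ht2⟩ := DSNV.pair_eq' hrs hev
      rw [← h1, ht1]
      exact hrep
    · rintro rfl
      exact ⟨hxC1, hxC2⟩
  have hpinj : Function.Injective pts := hpts.injective
  have hrange : (Set.range pts).ncard = n := by
    rw [← Set.image_univ, Set.ncard_image_of_injective _ hpinj, Set.ncard_univ]
    simp
  have hcard1 : C1.ncard = n := by
    rw [hC1, Set.ncard_image_of_injective _ (DSNV.fList_inj pts _), hrange]
  have hcard2 : C2.ncard = n := by
    rw [hC2, Set.ncard_image_of_injective _ (DSNV.fList_inj pts _), hrange]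
  have hUI := Set.ncard_union_add_ncard_inter C1 C2 hfin1 hfin2
  rw [hC12, Set.ncard_singleton, hcard1, hcard2] at hUI
  have hNcard : {y | Adj pts (k+1) x y}.ncard = 2 * (n - 1) := by
    rw [hN, Set.ncard_diff_singleton_of_mem (Set.mem_union_left _ hxC1)]
    omega
  -- the old neighbours
  have hyrV : fList pts a (pts r) ∈ V pts k := hak ▸ DSNV.mem_V_of_list r
  have hysV : fList pts a (pts s) ∈ V pts k := hak ▸ DSNV.mem_V_of_list s
  have hOld : {y | Adj pts (k+1) x y ∧ y ∈ V pts k}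
      = {fList pts a (pts r), fList pts a (pts s)} := by
    ext y
    simp only [Set.mem_setOf_eq, Set.mem_insert_iff, Set.mem_singleton_iff]
    constructor
    · rintro ⟨hadj, hyV⟩
      have hy : y ∈ (C1 ∪ C2) \ {x} := by rw [← hN]; exact hadj
      rcases hy.1 with hy1 | hy2
      · left
        obtain ⟨p, ⟨t1, rfl⟩, h1⟩ := hy1
        have hrt : r = t1 := by
          by_contra hne
          exact DSNV.not_mem_prev hpts hne (by rw [h1]; exact hak.symm ▸ hyV)
        rw [← h1, ← hrt, DSNV.fList_concat_self]
      · right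
        obtain ⟨p, ⟨t1, rfl⟩, h1⟩ := hy2
        have hst : s = t1 := by
          by_contra hne
          exact DSNV.not_mem_prev hpts hne (by rw [h1]; exact hak.symm ▸ hyV)
        rw [← h1, ← hst, DSNV.fList_concat_self]
    · rintro (rfl | rfl)
      · refine ⟨⟨fun e => hxnot (e ▸ hyrV), w1, by rw [fWord, hw1]; exact hxC1, ?_⟩, hyrV⟩
        rw [fWord, hw1]
        exact ⟨pts r, ⟨r, rfl⟩, DSNV.fList_concat_self pts a r⟩
      · refine ⟨⟨fun e => hxnot (e ▸ hysV), w2, by rw [fWord, hw2]; exact hxC2, ?_⟩, hysV⟩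
        rw [fWord, hw2]
        exact ⟨pts s, ⟨s, rfl⟩, DSNV.fList_concat_self pts a s⟩
  have hne_old : fList pts a (pts r) ≠ fList pts a (pts s) := by
    intro e
    have h0 := DSNV.rep_eq hpts rfl e r
    rw [DSNV.evec_apply_self, DSNV.evec_apply_ne (fun e' : r = s => hrs e')] at h0
    omega
  have hOldcard : {y | Adj pts (k+1) x y ∧ y ∈ V pts k}.ncard = 2 := by
    rw [hOld]
    exact Set.ncard_pair hne_old
  -- the new neighbours
  have hsub : {y | Adj pts (k+1) x y ∧ y ∈ V pts k} ⊆ {y | Adj pts (k+1) x y} :=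
    fun y hy => hy.1
  have hOldfin : {y | Adj pts (k+1) x y ∧ y ∈ V pts k}.Finite := by
    rw [hOld]; exact (Set.finite_singleton _).insert _
  have hNew : {y | Adj pts (k+1) x y ∧ y ∈ V pts (k+1) \ V pts k}
      = {y | Adj pts (k+1) x y} \ {y | Adj pts (k+1) x y ∧ y ∈ V pts k} := by
    ext y
    simp only [Set.mem_setOf_eq, Set.mem_diff]
    constructor
    · rintro ⟨h1, h2, h3⟩
      exact ⟨h1, fun h4 => h3 h4.2⟩
    · rintro ⟨h1, h2⟩
      refine ⟨h1, ?_, fun h3 => h2 ⟨h1, h3⟩⟩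
      obtain ⟨_, w, _, ⟨p, hp, rfl⟩⟩ := h1
      exact Set.mem_iUnion.mpr ⟨w, ⟨p, hp, rfl⟩⟩
  have hNewcard : {y | Adj pts (k+1) x y ∧ y ∈ V pts (k+1) \ V pts k}.ncard = 2 * (n - 2) := by
    rw [hNew, Set.ncard_diff hsub hOldfin, hNcard, hOldcard]
    omega
  exact ⟨hNcard, hOldcard, hNewcard⟩
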